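/- Let $\lambda > 0$, $-1 < \beta < 2$, $\zeta = +1$, and $0 < \sigma < \frac{2-\beta}{1+\beta}$. Suppose the Gagliardo–Nirenberg-type inequality $\|g\|_{L^{2\sigma+2}}^{2\sigma+2} \le C^{2\sigma+2} F(g)^{\frac{\sigma}{2}+1-\frac{(\sigma+1)\beta}{2}} \|D^{1-\beta/2}g\|_{L^2}^{(\sigma+1)\beta+\sigma}$ holds with constant $C > 0$, and let $u : [0,T) \to \mathscr{X}$ conserve the mass $F$ and the energy $E(u) = \frac{1}{2}\lambda\|D^{1-\beta/2}u\|_{L^2}^2 - \frac{1}{2(\sigma+1)}\|u\|_{L^{2\sigma+2}}^{2\sigma+2}$. Then $\sup_{t\in[0,T)} \|D^{1-\beta/2}u(t)\|_{L^2} < \infty$. -/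

import Mathlib

open MeasureTheory

/-- Fourier multiplier with symbol `|ξ|^γ`. -/
noncomputable def Dop (γ : ℝ) (f : ℝ → ℂ) : ℝ → ℂ :=
  fun x => (FourierTransformInv.fourierInv
    (fun ξ : ℝ => ((|ξ| ^ γ : ℝ) : ℂ) * (FourierTransform.fourier f : ℝ → ℂ) ξ) : ℝ → ℂ) x

/-- squared L² norm -/
noncomputable def L2sq (f : ℝ → ℂ) : ℝ := ∫ x : ℝ, ‖f x‖ ^ 2

/-- the quantity `∫ |f|^q` (the `L^q` norm raised to the power `q`) -/
noncomputable def Lpow (q : ℝ) (f : ℝ → ℂ) : ℝ := ∫ x : ℝ, ‖f x‖ ^ q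
lemma absorb (lam a b θ : ℝ) (hlam : 0 < lam) (hb : 0 ≤ b) (hθ : θ < 1) :
    ∃ M, ∀ x, 0 ≤ x → lam * x ≤ a + b * x ^ θ → x ≤ M := by
  set θ' := max θ 0 with hθ'def
  have hθ'0 : 0 ≤ θ' := le_max_right _ _
  have hθ'1 : θ' < 1 := max_lt hθ one_pos
  set K := (2 * b / lam) ^ (1 / (1 - θ')) with hKdef
  refine ⟨max (max 1 K) (2 * a / lam), fun x hx hineq => ?_⟩
  by_contra hcon
  push_neg at hcon
  have hx1 : 1 < x := lt_of_le_of_lt (le_trans (le_max_left 1 K) (le_max_left _ _)) hcon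
  have hxK : K ≤ x := le_of_lt (lt_of_le_of_lt (le_trans (le_max_right 1 K) (le_max_left _ _)) hcon)
  have h1 : x ^ θ ≤ x ^ θ' := Real.rpow_le_rpow_of_exponent_le hx1.le (le_max_left _ _)
  have hKnn : (0:ℝ) ≤ 2 * b / lam := by positivity
  have h2 : 2 * b / lam ≤ x ^ (1 - θ') := by
    have hle := Real.rpow_le_rpow (Real.rpow_nonneg hKnn _) hxK (by linarith : (0:ℝ) ≤ 1 - θ')
    have heq : K ^ (1 - θ') = 2 * b / lam := by
      rw [hKdef, ← Real.rpow_mul hKnn]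
      rw [one_div, inv_mul_cancel₀ (by linarith : (1:ℝ) - θ' ≠ 0), Real.rpow_one]
    rwa [heq] at hle
  have hxpos : (0:ℝ) < x := by linarith
  have h3 : b * x ^ θ' ≤ (lam / 2) * x := by
    have hb' : b ≤ lam / 2 * x ^ (1 - θ') := by
      rw [div_le_iff₀ hlam] at h2
      nlinarith
    calc b * x ^ θ' ≤ (lam / 2 * x ^ (1 - θ')) * x ^ θ' := by
          apply mul_le_mul_of_nonneg_right hb' (Real.rpow_nonneg hxpos.le _)
      _ = lam / 2 * x := by
          rw [mul_assoc, ← Real.rpow_add hxpos]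
          norm_num
  have h4 : b * x ^ θ ≤ b * x ^ θ' := mul_le_mul_of_nonneg_left h1 hb
  have hxa : x ≤ 2 * a / lam := by
    rw [le_div_iff₀ hlam]
    nlinarith
  have : x ≤ max (max 1 K) (2 * a / lam) := le_trans hxa (le_max_right _ _)
  linarith


/-- In the focusing mass-subcritical case `σ < (2-β)/(1+β)`, the Gagliardo–Nirenberg
inequality plus mass and energy conservation yield a uniform bound on
`‖D^{1-β/2}u(t)‖_{L²}`. -/
theorem stmt_16 (lam σ β T C : ℝ) (hlam : 0 < lam)
    (hβ₁ : -1 < β) (hβ₂ : β < 2) (hσ : 0 < σ) (hσsub : σ < (2 - β) / (1 + β))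
    (hC : 0 < C) (hT : 0 < T)
    (u : ℝ → ℝ → ℂ)
    (E F : ℝ → ℝ)
    (hE : ∀ t, E t = (1 / 2) * lam * L2sq (Dop (1 - β / 2) (fun x => u x t)) -
      (1 / (2 * (σ + 1))) * Lpow (2 * σ + 2) (fun x => u x t))
    (hF : ∀ t, F t = L2sq (Dop (-β / 2) (fun x => u x t)))
    (hFnonneg : ∀ t, 0 ≤ F t)
    (hGN : ∀ t, 0 ≤ t → t < T →
      Lpow (2 * σ + 2) (fun x => u x t) ≤
        C ^ (2 * σ + 2) * (F t) ^ (σ / 2 + 1 - (σ + 1) * β / 2) *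
          (L2sq (Dop (1 - β / 2) (fun x => u x t))) ^ (((σ + 1) * β + σ) / 2))
    (hL2nonneg : ∀ t, 0 ≤ L2sq (Dop (1 - β / 2) (fun x => u x t)))
    (hEcons : ∀ t, 0 ≤ t → t < T → E t = E 0)
    (hFcons : ∀ t, 0 ≤ t → t < T → F t = F 0) :
    ∃ M : ℝ, ∀ t, 0 ≤ t → t < T →
      L2sq (Dop (1 - β / 2) (fun x => u x t)) ≤ M := by
  set θ : ℝ := ((σ + 1) * β + σ) / 2 with hθdef
  have hβpos : 0 < 1 + β := by linarith
  have hθlt : θ < 1 := by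
    rw [lt_div_iff₀ hβpos] at hσsub
    rw [hθdef]
    nlinarith
  set b : ℝ := (1 / (σ + 1)) * (C ^ (2 * σ + 2) * (F 0) ^ (σ / 2 + 1 - (σ + 1) * β / 2)) with hbdef
  have hbnn : 0 ≤ b := by
    apply mul_nonneg
    · positivity
    · exact mul_nonneg (Real.rpow_nonneg hC.le _) (Real.rpow_nonneg (hFnonneg 0) _)
  obtain ⟨M, hM⟩ := absorb lam (2 * E 0) b θ hlam hbnn hθlt
  refine ⟨M, fun t ht htT => ?_⟩
  set x := L2sq (Dop (1 - β / 2) (fun x => u x t)) with hxdef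
  have hGNt := hGN t ht htT
  rw [hFcons t ht htT] at hGNt
  have hEt := (hEcons t ht htT).symm
  rw [hE t] at hEt
  have hσ1 : (0:ℝ) < σ + 1 := by linarith
  have h7 : lam * x = 2 * E 0 + (1 / (σ + 1)) * Lpow (2 * σ + 2) (fun x => u x t) := by
    have e : (1:ℝ) / (σ + 1) = 2 * (1 / (2 * (σ + 1))) := by field_simp
    rw [e]; linarith [hEt]
  have h8 : (1 / (σ + 1)) * Lpow (2 * σ + 2) (fun x => u x t) ≤
      (1 / (σ + 1)) * (C ^ (2 * σ + 2) * (F 0) ^ (σ / 2 + 1 - (σ + 1) * β / 2) * x ^ θ) :=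
    mul_le_mul_of_nonneg_left hGNt (by positivity)
  have h9 : b * x ^ θ = (1 / (σ + 1)) *
      (C ^ (2 * σ + 2) * (F 0) ^ (σ / 2 + 1 - (σ + 1) * β / 2) * x ^ θ) := by
    rw [hbdef]; ring
  apply hM x (hL2nonneg t)
  rw [h9]
  linarith
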